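/- Let c be a positive integer and let L be a real c×c matrix all of whose column sums are zero (∀ j, ∑ i, L i j = 0). Then every row of the adjugate matrix of L is constant: for all indices i, j, j', Matrix.adjugate L i j = Matrix.adjugate L i j'. (Equivalently, the (i,j)-th cofactor C_{ij} of L does not depend on i.) -/

import Mathlib

open Matrix

private lemma det_updateRow_finsum {c : ℕ} (M : Matrix (Fin c) (Fin c) ℝ) (r : Fin c)
    (s : Finset (Fin c)) (f : Fin c → (Fin c → ℝ)) :
    (M.updateRow r (∑ k ∈ s, f k)).det = ∑ k ∈ s, (M.updateRow r (f k)).det := by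
  classical
  induction s using Finset.induction_on with
  | empty =>
      simp only [Finset.sum_empty]
      exact det_eq_zero_of_row_eq_zero r (by simp)
  | insert _ _ hk ih =>
      rw [Finset.sum_insert hk, det_updateRow_add, ih, Finset.sum_insert hk]

private lemma det_updateRow_indep {c : ℕ} (L : Matrix (Fin c) (Fin c) ℝ)
    (hL : ∑ k, L k = 0) {j j' : Fin c} (hne : j ≠ j') (v : Fin c → ℝ) :
    (L.updateRow j v).det = (L.updateRow j' v).det := by
  classical
  set B := L.updateRow j v with hB
  set D := L.updateRow j' v with hD
  set w : Fin c → ℝ := ∑ k ∈ Finset.univ.erase j, L k with hw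
  have hmemj' : j' ∈ Finset.univ.erase j :=
    Finset.mem_erase.2 ⟨Ne.symm hne, Finset.mem_univ j'⟩
  have hmemj : j ∈ Finset.univ.erase j' :=
    Finset.mem_erase.2 ⟨hne, Finset.mem_univ j⟩
  have hLj' : L j' = -∑ k ∈ Finset.univ.erase j', L k := by
    have h := Finset.sum_erase_add Finset.univ L (Finset.mem_univ j')
    rw [hL] at h
    rw [eq_neg_iff_add_eq_zero, add_comm, h]
  -- Step 1 : det (B.updateRow j' w) = det B
  have step1 : (B.updateRow j' w).det = B.det := by
    rw [hw, det_updateRow_finsum _ _ _ (fun k => L k)]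
    have hsum : ∑ k ∈ Finset.univ.erase j, (B.updateRow j' (L k)).det
        = (B.updateRow j' (L j')).det := by
      refine Finset.sum_eq_single_of_mem j' hmemj' ?_
      intro k hk hkj'
      have hkj : k ≠ j := Finset.ne_of_mem_erase hk
      have : L k = B k := by rw [hB, updateRow_ne hkj]
      rw [this]
      exact det_updateRow_eq_zero hkj'
    rw [hsum]
    have : L j' = B j' := by rw [hB, updateRow_ne (Ne.symm hne)]
    rw [this, updateRow_eq_self]
  -- E is B.updateRow j' w with rows j and j' swapped
  set E := D.updateRow j w with hE
  have hswap : E = (B.updateRow j' w).submatrix (Equiv.swap j j') id := by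
    funext a b
    rcases eq_or_ne a j with rfl | haj
    · simp [hE, Equiv.swap_apply_left, updateRow_apply, hne, Ne.symm hne]
    rcases eq_or_ne a j' with rfl | haj'
    · simp [hE, hD, hB, Equiv.swap_apply_right, updateRow_apply, hne, Ne.symm hne]
    · simp [hE, hD, hB, Equiv.swap_apply_of_ne_of_ne haj haj', updateRow_apply, haj, haj']
  have step2 : E.det = -(B.updateRow j' w).det := by
    rw [hswap, det_permute, Equiv.Perm.sign_swap hne]
    push_cast
    ring
  -- Step 3 : det E = det (D.updateRow j (L j'))
  have step3 : E.det = (D.updateRow j (L j')).det := by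
    rw [hE, hw, det_updateRow_finsum _ _ _ (fun k => L k)]
    refine Finset.sum_eq_single_of_mem j' hmemj' ?_
    intro k hk hkj'
    have hkj : k ≠ j := Finset.ne_of_mem_erase hk
    have : L k = D k := by rw [hD, updateRow_ne hkj']
    rw [this]
    exact det_updateRow_eq_zero hkj
  -- Step 4 : det (D.updateRow j (L j')) = -det D
  have step4 : (D.updateRow j (L j')).det = -D.det := by
    have hneg : L j' = (-1 : ℝ) • ∑ k ∈ Finset.univ.erase j', L k := by
      rw [hLj']; simp
    rw [hneg, det_updateRow_smul, det_updateRow_finsum _ _ _ (fun k => L k)]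
    have hsum : ∑ k ∈ Finset.univ.erase j', (D.updateRow j (L k)).det
        = (D.updateRow j (L j)).det := by
      refine Finset.sum_eq_single_of_mem j hmemj ?_
      intro k hk hkj
      have hkj' : k ≠ j' := Finset.ne_of_mem_erase hk
      have : L k = D k := by rw [hD, updateRow_ne hkj']
      rw [this]
      exact det_updateRow_eq_zero hkj
    rw [hsum]
    have : L j = D j := by rw [hD, updateRow_ne hne]
    rw [this, updateRow_eq_self]
    ring
  -- combine
  have h := step2
  rw [step3, step4, step1] at h
  linarith

theorem adjugate_rows_constant_of_zero_column_sums
    (c : ℕ) (hc : 0 < c)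
    (L : Matrix (Fin c) (Fin c) ℝ)
    (hcol : ∀ j, ∑ i, L i j = 0) :
    ∀ i j j', Matrix.adjugate L i j = Matrix.adjugate L i j' := by
  have hL : ∑ k, L k = 0 := by
    funext m
    exact (Finset.sum_apply m Finset.univ (fun k => L k)).trans (hcol m)
  intro i j j'
  rcases eq_or_ne j j' with rfl | hne
  · rfl
  · rw [adjugate_apply, adjugate_apply]
    exact det_updateRow_indep L hL hne _
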